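/- Let n ≥ 1 and let g, h ∈ A_n be a p-cycle and an r-cycle with supports Δ and Δ' respectively, where p ≤ r are primes with p + r < n and Δ ∩ Δ' = ∅. Then the proportion |{x ∈ A_n : |Δ^x ∩ Δ'| = 1}| / |A_n| is strictly greater than r·p·(n − r·p)/(n − p + 2)², where Δ^x denotes the image of the set Δ under the permutation x. -/

import Mathlib

open Equiv Finset

lemma perm_trans_on_finsets {n : ℕ} (S T : Finset (Fin n)) (hCard : S.card = T.card)
    (h2 : 2 ≤ T.card) :
    ∃ x ∈ alternatingGroup (Fin n), S.image x = T := by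
  classical
  have e : {y // y ∈ S} ≃ {y // y ∈ T} :=
    (Finset.equivFin S).trans ((finCongr hCard).trans (Finset.equivFin T).symm)
  set σ : Equiv.Perm (Fin n) := e.extendSubtype with hσ
  have himg : S.image σ = T := by
    apply Finset.eq_of_subset_of_card_le
    · intro y hy
      simp only [Finset.mem_image] at hy
      obtain ⟨a, ha, rfl⟩ := hy
      exact e.extendSubtype_mem a ha
    · rw [Finset.card_image_of_injective _ σ.injective, hCard]
  obtain ⟨a, ha, b, hb, hab⟩ := Finset.one_lt_card.mp h2
  rcases Int.units_eq_one_or (Equiv.Perm.sign σ) with hs | hs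
  · exact ⟨σ, hs, himg⟩
  · refine ⟨Equiv.swap a b * σ, ?_, ?_⟩
    · simp [Equiv.Perm.mem_alternatingGroup, Equiv.Perm.sign_swap hab, hs]
    · have : S.image ⇑(Equiv.swap a b * σ) = (S.image σ).image (Equiv.swap a b) := by
        rw [Finset.image_image]; rfl
      rw [this, himg]
      apply Finset.eq_of_subset_of_card_le
      · intro y hy
        simp only [Finset.mem_image] at hy
        obtain ⟨c, hc, rfl⟩ := hy
        rcases eq_or_ne c a with rfl | hca
        · simpa [Equiv.swap_apply_left] using hb
        rcases eq_or_ne c b with rfl | hcb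
        · simpa [Equiv.swap_apply_right] using ha
        · rwa [Equiv.swap_apply_of_ne_of_ne hca hcb]
      · rw [Finset.card_image_of_injective _ (Equiv.swap a b).injective]

open Finset

lemma card_subsets_meeting_in_one {n p r : ℕ} (D' : Finset (Fin n)) (hD' : D'.card = r)
    (hp : 1 ≤ p) :
    ((Finset.univ.powersetCard p).filter (fun S => (S ∩ D').card = 1)).card
      = r * Nat.choose (n - r) (p - 1) := by
  classical
  have key : ((Finset.univ.powersetCard p).filter (fun S => (S ∩ D').card = 1)).card
      = (D' ×ˢ (D'ᶜ.powersetCard (p-1))).card := by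
    refine Finset.card_bij' (fun S hS => ((S ∩ D').min' (by
        have := (Finset.mem_filter.mp hS).2
        exact Finset.card_pos.mp (by omega)), S \ D'))
      (fun q _ => insert q.1 q.2) ?_ ?_ ?_ ?_
    · intro S hS
      simp only [Finset.mem_filter, Finset.mem_powersetCard_univ] at hS
      obtain ⟨hcard, hone⟩ := hS
      obtain ⟨a, ha⟩ := Finset.card_eq_one.mp hone
      simp only [Finset.mem_product]
      constructor
      · have := (S ∩ D').min'_mem (by rw [ha]; simp)
        exact (Finset.mem_inter.mp this).2
      · rw [Finset.mem_powersetCard]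
        refine ⟨fun y hy => ?_, ?_⟩
        · rw [Finset.mem_compl]; exact (Finset.mem_sdiff.mp hy).2
        · have h2 := Finset.card_sdiff_add_card_inter S D'
          omega
    · intro q hq
      simp only [Finset.mem_product, Finset.mem_powersetCard] at hq
      obtain ⟨hq1, hq2, hq3⟩ := hq
      have haB : q.1 ∉ q.2 := fun h => (Finset.mem_compl.mp (hq2 h)) hq1
      simp only [Finset.mem_filter, Finset.mem_powersetCard_univ]
      constructor
      · rw [Finset.card_insert_of_notMem haB, hq3]; omega
      · have : insert q.1 q.2 ∩ D' = {q.1} := by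
          ext y
          simp only [Finset.mem_inter, Finset.mem_insert, Finset.mem_singleton]
          constructor
          · rintro ⟨(rfl | hy), hy'⟩
            · rfl
            · exact absurd hy' (Finset.mem_compl.mp (hq2 hy))
          · rintro rfl; exact ⟨Or.inl rfl, hq1⟩
        rw [this, Finset.card_singleton]
    · intro S hS
      simp only [Finset.mem_filter, Finset.mem_powersetCard_univ] at hS
      obtain ⟨a, ha⟩ := Finset.card_eq_one.mp hS.2
      dsimp only
      have hm : (S ∩ D').min' (by have := hS.2; exact Finset.card_pos.mp (by omega)) = a := by
        have h1' : ∀ y, y ∈ S ∩ D' → y = a := fun y hy => by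
          rw [ha, Finset.mem_singleton] at hy; exact hy
        exact h1' _ (Finset.min'_mem (S ∩ D') _)
      rw [hm]
      ext y
      simp only [Finset.mem_insert, Finset.mem_sdiff]
      constructor
      · rintro (rfl | ⟨h1, _⟩)
        · have : y ∈ S ∩ D' := by rw [ha]; exact Finset.mem_singleton_self y
          exact (Finset.mem_inter.mp this).1
        · exact h1
      · intro hy
        by_cases hyD : y ∈ D'
        · left
          have : y ∈ S ∩ D' := Finset.mem_inter.mpr ⟨hy, hyD⟩
          rw [ha, Finset.mem_singleton] at this; exact this
        · right; exact ⟨hy, hyD⟩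
    · intro q hq
      simp only [Finset.mem_product, Finset.mem_powersetCard] at hq
      obtain ⟨hq1, hq2, hq3⟩ := hq
      have hint : insert q.1 q.2 ∩ D' = {q.1} := by
        ext y
        simp only [Finset.mem_inter, Finset.mem_insert, Finset.mem_singleton]
        constructor
        · rintro ⟨(rfl | hy), hy'⟩
          · rfl
          · exact absurd hy' (Finset.mem_compl.mp (hq2 hy))
        · rintro rfl; exact ⟨Or.inl rfl, hq1⟩
      have hm : ∀ hne, (insert q.1 q.2 ∩ D').min' hne = q.1 := by
        intro hne
        have h1' : ∀ y, y ∈ insert q.1 q.2 ∩ D' → y = q.1 := fun y hy => by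
          rw [hint, Finset.mem_singleton] at hy; exact hy
        exact h1' _ (Finset.min'_mem _ hne)
      have hsd : insert q.1 q.2 \ D' = q.2 := by
        ext y
        simp only [Finset.mem_sdiff, Finset.mem_insert]
        constructor
        · rintro ⟨(rfl | hy), hy'⟩
          · exact absurd hq1 hy'
          · exact hy
        · intro hy; exact ⟨Or.inr hy, Finset.mem_compl.mp (hq2 hy)⟩
      simp [hm _, hsd]
  rw [key, Finset.card_product, hD', Finset.card_powersetCard, Finset.card_compl, hD',
    Fintype.card_fin]

open scoped Classical

section
variable {n p : ℕ} (Δ : Finset (Fin n))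

noncomputable def AG (n : ℕ) : Finset (Equiv.Perm (Fin n)) :=
  Finset.univ.filter (fun x => x ∈ alternatingGroup (Fin n))

lemma fiber_const (hΔ : Δ.card = p) (h2 : 2 ≤ p) (S : Finset (Fin n)) (hS : S.card = p) :
    ((AG n).filter (fun x : Equiv.Perm (Fin n) => Δ.image ⇑x = S)).card
      = ((AG n).filter (fun x : Equiv.Perm (Fin n) => Δ.image ⇑x = Δ)).card := by
  obtain ⟨σ, hσA, hσ⟩ := perm_trans_on_finsets Δ S (by rw [hΔ, hS]) (hS ▸ h2)
  refine Finset.card_bij' (fun x _ => σ⁻¹ * x) (fun y _ => σ * y) ?_ ?_ ?_ ?_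
  · intro x hx
    simp only [AG, Finset.mem_filter, Finset.mem_univ, true_and] at hx ⊢
    refine ⟨mul_mem (inv_mem hσA) hx.1, ?_⟩
    have : Δ.image ⇑(σ⁻¹ * x) = (Δ.image ⇑x).image ⇑σ⁻¹ := by
      rw [Finset.image_image]; rfl
    rw [this, hx.2, ← hσ, Finset.image_image]
    ext a
    simp [Function.comp, Equiv.symm_apply_apply]
  · intro y hy
    simp only [AG, Finset.mem_filter, Finset.mem_univ, true_and] at hy ⊢
    refine ⟨mul_mem hσA hy.1, ?_⟩
    have : Δ.image ⇑(σ * y) = (Δ.image ⇑y).image ⇑σ := by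
      rw [Finset.image_image]; rfl
    rw [this, hy.2, hσ]
  · intro x _; simp [mul_assoc]
  · intro y _; simp [mul_assoc]

lemma AG_card_eq (hΔ : Δ.card = p) (h2 : 2 ≤ p) :
    (AG n).card = (Nat.choose n p) * ((AG n).filter (fun x : Equiv.Perm (Fin n) => Δ.image ⇑x = Δ)).card := by
  have hfib : ∀ x ∈ AG n, Δ.image ⇑x ∈ Finset.univ.powersetCard p := by
    intro x _
    rw [Finset.mem_powersetCard_univ, Finset.card_image_of_injective _ x.injective, hΔ]
  rw [Finset.card_eq_sum_card_fiberwise hfib]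
  have : ∀ S ∈ Finset.univ.powersetCard p,
      ((AG n).filter (fun x : Equiv.Perm (Fin n) => Δ.image ⇑x = S)).card
        = ((AG n).filter (fun x : Equiv.Perm (Fin n) => Δ.image ⇑x = Δ)).card := by
    intro S hS
    exact fiber_const Δ hΔ h2 S (Finset.mem_powersetCard_univ.mp hS)
  rw [Finset.sum_congr rfl this, Finset.sum_const, smul_eq_mul,
    Finset.card_powersetCard, Finset.card_univ, Fintype.card_fin]

lemma AGS_card_eq (D' : Finset (Fin n)) (hΔ : Δ.card = p) (h2 : 2 ≤ p) :
    ((AG n).filter (fun x : Equiv.Perm (Fin n) => (Δ.image ⇑x ∩ D').card = 1)).card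
      = ((Finset.univ.powersetCard p).filter (fun S => (S ∩ D').card = 1)).card
        * ((AG n).filter (fun x : Equiv.Perm (Fin n) => Δ.image ⇑x = Δ)).card := by
  set T := (AG n).filter (fun x : Equiv.Perm (Fin n) => (Δ.image ⇑x ∩ D').card = 1) with hT
  have hfib : ∀ x ∈ T, Δ.image ⇑x
      ∈ (Finset.univ.powersetCard p).filter (fun S => (S ∩ D').card = 1) := by
    intro x hx
    rw [hT, Finset.mem_filter] at hx
    rw [Finset.mem_filter, Finset.mem_powersetCard_univ,
      Finset.card_image_of_injective _ x.injective, hΔ]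
    exact ⟨rfl, hx.2⟩
  rw [Finset.card_eq_sum_card_fiberwise hfib]
  have key : ∀ S ∈ (Finset.univ.powersetCard p).filter (fun S => (S ∩ D').card = 1),
      (T.filter (fun x : Equiv.Perm (Fin n) => Δ.image ⇑x = S)).card
        = ((AG n).filter (fun x : Equiv.Perm (Fin n) => Δ.image ⇑x = Δ)).card := by
    intro S hS
    rw [Finset.mem_filter, Finset.mem_powersetCard_univ] at hS
    have : T.filter (fun x : Equiv.Perm (Fin n) => Δ.image ⇑x = S) = (AG n).filter (fun x : Equiv.Perm (Fin n) => Δ.image ⇑x = S) := by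
      rw [hT, Finset.filter_filter]
      apply Finset.filter_congr
      intro x _
      constructor
      · rintro ⟨_, h⟩; exact h
      · rintro h; exact ⟨by rw [h]; exact hS.2, h⟩
    rw [this]
    exact fiber_const Δ hΔ h2 S hS.1
  rw [Finset.sum_congr rfl key, Finset.sum_const, smul_eq_mul]

lemma fiber_pos (hΔ : Δ.card = p) :
    0 < ((AG n).filter (fun x : Equiv.Perm (Fin n) => Δ.image ⇑x = Δ)).card := by
  rw [Finset.card_pos]
  refine ⟨1, ?_⟩
  simp [AG, Finset.mem_filter, one_mem]

end


lemma choose_ratio_bound : ∀ (k m M : ℕ), k ≤ m → m ≤ M →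
    M.choose k * (m + 1 - k) ^ k ≤ m.choose k * (M + 1 - k) ^ k := by
  intro k
  induction k with
  | zero => intro m M _ _; simp
  | succ k ih =>
    intro m M hkm hmM
    have hkm' : k ≤ m := by omega
    have IH := ih m M hkm' hmM
    have e1 : m + 1 - k = m - k + 1 := by omega
    have e2 : M + 1 - k = M - k + 1 := by omega
    rw [e1, e2] at IH
    -- key1 : (m-k) * (M-k+1) ≤ (M-k) * (m-k+1)
    have hmk : m - k ≤ M - k := by omega
    have key1 : (m - k) * (M - k + 1) ≤ (M - k) * (m - k + 1) := by nlinarith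
    have key1k : ((m - k) * (M - k + 1)) ^ k ≤ ((M - k) * (m - k + 1)) ^ k :=
      Nat.pow_le_pow_left key1 k
    -- key2 : C(M,k) * (m-k)^k ≤ C(m,k) * (M-k)^k
    have key2 : M.choose k * (m - k) ^ k ≤ m.choose k * (M - k) ^ k := by
      have c1 : M.choose k * (m - k) ^ k * (M - k + 1) ^ k
          ≤ m.choose k * (M - k) ^ k * (M - k + 1) ^ k := by
        calc M.choose k * (m - k) ^ k * (M - k + 1) ^ k
            = M.choose k * ((m - k) * (M - k + 1)) ^ k := by rw [mul_pow]; ring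
          _ ≤ M.choose k * ((M - k) * (m - k + 1)) ^ k := Nat.mul_le_mul_left _ key1k
          _ = (M.choose k * (m - k + 1) ^ k) * (M - k) ^ k := by rw [mul_pow]; ring
          _ ≤ (m.choose k * (M - k + 1) ^ k) * (M - k) ^ k := Nat.mul_le_mul_right _ IH
          _ = m.choose k * (M - k) ^ k * (M - k + 1) ^ k := by ring
      exact Nat.le_of_mul_le_mul_right c1 (pow_pos (by omega) k)
    have e3 : m + 1 - (k + 1) = m - k := by omega
    have e4 : M + 1 - (k + 1) = M - k := by omega
    rw [e3, e4]
    have main : M.choose (k + 1) * (m - k) ^ (k + 1) * (k + 1)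
        ≤ m.choose (k + 1) * (M - k) ^ (k + 1) * (k + 1) := by
      calc M.choose (k + 1) * (m - k) ^ (k + 1) * (k + 1)
          = (M.choose (k + 1) * (k + 1)) * (m - k) ^ (k + 1) := by ring
      _ = (M.choose k * (M - k)) * (m - k) ^ (k + 1) := by rw [Nat.choose_succ_right_eq]
      _ = (M.choose k * (m - k) ^ k) * ((M - k) * (m - k)) := by rw [pow_succ]; ring
      _ ≤ (m.choose k * (M - k) ^ k) * ((M - k) * (m - k)) := Nat.mul_le_mul_right _ key2
      _ = (m.choose k * (m - k)) * (M - k) ^ (k + 1) := by rw [pow_succ]; ring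
      _ = (m.choose (k + 1) * (k + 1)) * (M - k) ^ (k + 1) := by rw [Nat.choose_succ_right_eq]
      _ = m.choose (k + 1) * (M - k) ^ (k + 1) * (k + 1) := by ring
    exact Nat.le_of_mul_le_mul_right main (Nat.succ_pos k)


lemma poly_ineq {N P R : ℝ} (h2p : 2 ≤ P) (hpr : P ≤ R) (hn : P + R + 1 ≤ N) :
    (N - R * P) * N * (N - P + 1) < (N - R * P + R) * (N - P + 2) ^ 2 := by
  set m : ℝ := N - P + 2 with hm
  set A : ℝ := N - R * P with hA
  have hmpos : (0 : ℝ) < m := by simp only [hm]; nlinarith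
  have hy2 : N - P + 1 = m - 1 := by simp only [hm]; ring
  have hNm : N = m + P - 2 := by simp only [hm]; ring
  have hident : (A + R) * m ^ 2 - A * N * (N - P + 1)
      = R * m ^ 2 - A * ((P - 3) * m - (P - 2)) := by
    simp only [hA, hm]; ring
  have suff : A * ((P - 3) * m - (P - 2)) < R * m ^ 2 := by
    set B : ℝ := (P - 3) * m - (P - 2) with hB
    have hAm : A < m := by simp only [hA, hm]; nlinarith
    have fact1 : -A < R * m := by simp only [hA, hm]; nlinarith [mul_le_mul_of_nonneg_right hn (by linarith : (0:ℝ) ≤ R + 1)]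
    have fact2 : -m ≤ B := by simp only [hB]; nlinarith
    rcases le_or_gt A 0 with hA0 | hA0 <;> rcases le_or_gt B 0 with hB0 | hB0
    · nlinarith [mul_nonneg (neg_nonneg.mpr hA0) (neg_nonneg.mpr hB0)]
    · nlinarith [mul_nonpos_of_nonpos_of_nonneg hA0 hB0.le, mul_pos hmpos hmpos]
    · nlinarith [mul_nonpos_of_nonneg_of_nonpos hA0.le hB0, mul_pos hmpos hmpos]
    · have hP3 : (P - 3) * m > 0 := by nlinarith
      have hP3' : 0 < P - 3 := by
        rcases le_or_gt (P - 3) 0 with h | h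
        · nlinarith
        · exact h
      nlinarith [mul_pos hA0 hmpos]
  show A * N * (N - P + 1) < (A + R) * m ^ 2
  linarith [hident, suff]

lemma ratio_gt {n p r K0 K1 K2 : ℕ} (h2p : 2 ≤ p) (hpr : p ≤ r) (hn : p + r < n)
    (f1 : (n : ℝ) * K1 = K0 * p)
    (f2 : (K1 : ℝ) * ((n : ℝ) - r - p + 2) ^ (p - 1) ≤ (K2 : ℝ) * ((n : ℝ) - p + 1) ^ (p - 1))
    (hK0 : 0 < K0) :
    (r : ℝ) * K2 / K0 > (r : ℝ) * p * ((n : ℝ) - r * p) / ((n : ℝ) - p + 2) ^ 2 := by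
  have hP : (2 : ℝ) ≤ p := by exact_mod_cast h2p
  have hR : (p : ℝ) ≤ r := by exact_mod_cast hpr
  have hN : (p : ℝ) + r + 1 ≤ n := by exact_mod_cast hn
  set N : ℝ := (n : ℝ)
  set P : ℝ := (p : ℝ)
  set R : ℝ := (r : ℝ)
  set y1 : ℝ := N - R - P + 2 with hy1
  set y2 : ℝ := N - P + 1 with hy2
  set m : ℝ := N - P + 2 with hmm
  have hy1pos : 0 < y1 := by simp only [hy1]; nlinarith
  have hy2pos : 0 < y2 := by simp only [hy2]; nlinarith
  have hmpos : 0 < m := by simp only [hmm]; nlinarith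
  have hNpos : 0 < N := by nlinarith
  have hK0R : (0 : ℝ) < K0 := by exact_mod_cast hK0
  have hkcast : ((p - 1 : ℕ) : ℝ) = P - 1 := by
    have : 1 ≤ p := by omega
    push_cast [Nat.cast_sub this]; ring
  -- Bernoulli
  have hB : (N - R * P + R) / y2 ≤ (y1 / y2) ^ (p - 1) := by
    have ha : (-2 : ℝ) ≤ y1 / y2 - 1 := by
      have : 0 ≤ y1 / y2 := le_of_lt (div_pos hy1pos hy2pos)
      linarith
    have := one_add_mul_le_pow ha (p - 1)
    have heq : 1 + ((p - 1 : ℕ) : ℝ) * (y1 / y2 - 1) = (N - R * P + R) / y2 := by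
      rw [hkcast]
      field_simp
      simp only [hy1, hy2]; ring
    calc (N - R * P + R) / y2 = 1 + ((p - 1 : ℕ) : ℝ) * (y1 / y2 - 1) := heq.symm
      _ ≤ (1 + (y1 / y2 - 1)) ^ (p - 1) := this
      _ = (y1 / y2) ^ (p - 1) := by ring_nf
  -- convert Bernoulli to multiplicative form
  have hBmul : (N - R * P + R) * y2 ^ (p - 1) ≤ y1 ^ (p - 1) * y2 := by
    have h1 := mul_le_mul_of_nonneg_right hB (by positivity : (0:ℝ) ≤ y2 ^ (p - 1) * y2)
    calc (N - R * P + R) * y2 ^ (p - 1)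
        = (N - R * P + R) / y2 * (y2 ^ (p - 1) * y2) := by field_simp
      _ ≤ (y1 / y2) ^ (p - 1) * (y2 ^ (p - 1) * y2) := h1
      _ = y1 ^ (p - 1) * y2 := by rw [div_pow]; field_simp
  -- combine with f2 and f1
  have hhh : K0 * P * (N - R * P + R) * y2 ^ (p - 1) ≤ (K2 : ℝ) * y2 ^ (p - 1) * y2 * N := by
    calc (K0 : ℝ) * P * (N - R * P + R) * y2 ^ (p - 1)
        = N * K1 * ((N - R * P + R) * y2 ^ (p - 1)) := by rw [← f1]; ring
      _ ≤ N * K1 * (y1 ^ (p - 1) * y2) := by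
          apply mul_le_mul_of_nonneg_left hBmul (by positivity)
      _ = (K1 * y1 ^ (p - 1)) * y2 * N := by ring
      _ ≤ ((K2 : ℝ) * y2 ^ (p - 1)) * y2 * N := by
          apply mul_le_mul_of_nonneg_right (mul_le_mul_of_nonneg_right f2 hy2pos.le) hNpos.le
      _ = (K2 : ℝ) * y2 ^ (p - 1) * y2 * N := by ring
  have h2 : K0 * P * (N - R * P + R) ≤ (K2 : ℝ) * y2 * N := by
    have hpow : (0 : ℝ) < y2 ^ (p - 1) := by positivity
    have := hhh
    have hre : (K0 : ℝ) * P * (N - R * P + R) * y2 ^ (p - 1)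
        = (K0 * P * (N - R * P + R)) * y2 ^ (p - 1) := by ring
    have hre2 : (K2 : ℝ) * y2 ^ (p - 1) * y2 * N = ((K2 : ℝ) * y2 * N) * y2 ^ (p - 1) := by ring
    rw [hre, hre2] at this
    exact le_of_mul_le_mul_right this hpow
  -- polynomial inequality
  have hpoly := poly_ineq hP hR hN
  -- final assembly
  rw [gt_iff_lt, div_lt_div_iff₀ (by positivity) hK0R]
  -- goal : R * P * (N - R*P) / m^2 ... careful
  have final : (R * P * (N - R * P)) * (K0 : ℝ) * (N * y2) < (R * (K2 : ℝ)) * m ^ 2 * (N * y2) := by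
    calc (R * P * (N - R * P)) * (K0 : ℝ) * (N * y2)
        = (R * P * K0) * ((N - R * P) * N * y2) := by ring
      _ < (R * P * K0) * ((N - R * P + R) * m ^ 2) := by
          apply mul_lt_mul_of_pos_left _
            (mul_pos (mul_pos (by linarith : (0:ℝ) < R) (by linarith : (0:ℝ) < P)) hK0R)
          simpa [hy2, hmm] using hpoly
      _ = (R * m ^ 2) * (K0 * P * (N - R * P + R)) := by ring
      _ ≤ (R * m ^ 2) * ((K2 : ℝ) * y2 * N) := by
          apply mul_le_mul_of_nonneg_left h2 (by positivity)
      _ = (R * (K2 : ℝ)) * m ^ 2 * (N * y2) := by ring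
  have := lt_of_mul_lt_mul_right final (by positivity : (0:ℝ) ≤ N * y2)
  calc R * P * (N - R * P) * K0 = R * P * (N - R * P) * K0 := rfl
    _ < R * K2 * m ^ 2 := this
    _ = R * K2 * (N - P + 2) ^ 2 := by rw [hmm]

/-- Lemma: for disjoint `p`- and `r`-cycles `g, h ∈ A_n` with `p + r < n`, the proportion of
`x ∈ A_n` for which `|Δ^x ∩ Δ'| = 1` is greater than `rp(n - rp)/(n - p + 2)²`. -/
theorem proportion_conjugates_meeting_support_in_one_point
    (n p r : ℕ) (hp : p.Prime) (hr : r.Prime) (hpr : p ≤ r) (hprn : p + r < n)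
    (g h : Equiv.Perm (Fin n))
    (hg : g ∈ alternatingGroup (Fin n)) (hh : h ∈ alternatingGroup (Fin n))
    (hgc : g.IsCycle) (hgp : g.support.card = p)
    (hhc : h.IsCycle) (hhr : h.support.card = r)
    (hdisj : g.support ∩ h.support = ∅) :
    (Nat.card {x : Equiv.Perm (Fin n) // x ∈ alternatingGroup (Fin n) ∧
        (g.support.image x ∩ h.support).card = 1} : ℝ) /
      (Nat.card (alternatingGroup (Fin n)) : ℝ) >
      (r : ℝ) * (p : ℝ) * ((n : ℝ) - (r : ℝ) * (p : ℝ)) / ((n : ℝ) - (p : ℝ) + 2) ^ 2 := by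
  have h2p : 2 ≤ p := hp.two_le
  have h2r : 2 ≤ r := hr.two_le
  set Δ : Finset (Fin n) := g.support with hΔdef
  set D' : Finset (Fin n) := h.support with hD'def
  set c : ℕ := ((AG n).filter (fun x : Equiv.Perm (Fin n) => Δ.image ⇑x = Δ)).card with hc
  have hcpos : 0 < c := fiber_pos Δ hgp
  -- numerator count
  have hnum : Nat.card {x : Equiv.Perm (Fin n) // x ∈ alternatingGroup (Fin n) ∧
      (g.support.image x ∩ h.support).card = 1}
      = (r * Nat.choose (n - r) (p - 1)) * c := by
    rw [Nat.card_eq_fintype_card, Fintype.card_subtype]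
    have e1 : (Finset.univ.filter (fun x : Equiv.Perm (Fin n) => x ∈ alternatingGroup (Fin n) ∧
        (g.support.image ⇑x ∩ h.support).card = 1))
        = (AG n).filter (fun x : Equiv.Perm (Fin n) => (Δ.image ⇑x ∩ D').card = 1) := by
      rw [AG, Finset.filter_filter]
    rw [e1, AGS_card_eq Δ D' hgp h2p, card_subsets_meeting_in_one D' hhr (by omega)]
  -- denominator count
  have hden : Nat.card (alternatingGroup (Fin n)) = Nat.choose n p * c := by
    rw [Nat.card_eq_fintype_card, Fintype.card_subtype, ← AG_card_eq Δ hgp h2p, AG]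
  rw [hnum, hden]
  -- binomial facts
  have hK0pos : 0 < Nat.choose n p := Nat.choose_pos (by omega)
  have f1 : (n : ℝ) * ((n - 1).choose (p - 1) : ℕ) = (Nat.choose n p : ℝ) * p := by
    have key := Nat.add_one_mul_choose_eq (n - 1) (p - 1)
    have e1 : n - 1 + 1 = n := by omega
    have e2 : p - 1 + 1 = p := by omega
    rw [e1, e2] at key
    exact_mod_cast congrArg (fun t : ℕ => (t : ℝ)) key
  have f2 : ((n - 1).choose (p - 1) : ℝ) * ((n : ℝ) - r - p + 2) ^ (p - 1)
      ≤ ((n - r).choose (p - 1) : ℝ) * ((n : ℝ) - p + 1) ^ (p - 1) := by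
    have key := choose_ratio_bound (p - 1) (n - r) (n - 1) (by omega) (by omega)
    have c1 : ((n - r + 1 - (p - 1) : ℕ) : ℝ) = (n : ℝ) - r - p + 2 := by
      have h1 : (p - 1 : ℕ) ≤ n - r + 1 := by omega
      rw [Nat.cast_sub h1, Nat.cast_add, Nat.cast_sub (by omega : r ≤ n),
        Nat.cast_sub (by omega : 1 ≤ p)]
      push_cast; ring
    have c2 : ((n - 1 + 1 - (p - 1) : ℕ) : ℝ) = (n : ℝ) - p + 1 := by
      have h1 : (p - 1 : ℕ) ≤ n - 1 + 1 := by omega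
      rw [Nat.cast_sub h1, Nat.cast_add, Nat.cast_sub (by omega : 1 ≤ n),
        Nat.cast_sub (by omega : 1 ≤ p)]
      push_cast; ring
    have keyR : (((n - 1).choose (p - 1) : ℕ) : ℝ) * (((n - r + 1 - (p - 1) : ℕ) : ℝ)) ^ (p - 1)
        ≤ (((n - r).choose (p - 1) : ℕ) : ℝ) * (((n - 1 + 1 - (p - 1) : ℕ) : ℝ)) ^ (p - 1) := by
      exact_mod_cast key
    rwa [c1, c2] at keyR
  have main := ratio_gt h2p hpr hprn f1 f2 hK0pos
  -- reduce the c-factor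
  have hcast : ((r * Nat.choose (n - r) (p - 1) * c : ℕ) : ℝ) / ((Nat.choose n p * c : ℕ) : ℝ)
      = (r : ℝ) * ((n - r).choose (p - 1) : ℕ) / (Nat.choose n p : ℝ) := by
    have hcne : (c : ℝ) ≠ 0 := Nat.cast_ne_zero.mpr hcpos.ne'
    have hK0ne : ((n.choose p : ℕ) : ℝ) ≠ 0 := Nat.cast_ne_zero.mpr hK0pos.ne'
    push_cast
    field_simp
  rw [hcast]
  exact main
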